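/- Let A be an n×n real SPD matrix, 𝓑 an m×m real SPD matrix, and Π an n×m real matrix such that (Πw)ᵀ A (Πw) ≤ γ · wᵀ 𝓑 w for all w ∈ ℝᵐ, for some γ > 0. Let M be an n×n real matrix with M + Mᵀ − A SPD, let M̄ = M (M + Mᵀ − A)⁻¹ Mᵀ, and define B_add⁻¹ = M̄⁻¹ + Π 𝓑⁻¹ Πᵀ. Then vᵀ B_add⁻¹ v ≤ (γ + 2) · vᵀ A⁻¹ v for all v ∈ ℝⁿ. -/

import Mathlib

open Matrix

section Aux

variable {k l : ℕ}

private lemma qn {X : Matrix (Fin k) (Fin k) ℝ} (hX : X.PosSemidef) (z : Fin k → ℝ) :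
    0 ≤ z ⬝ᵥ X.mulVec z := by simpa using hX.dotProduct_mulVec_nonneg z

private lemma qp {X : Matrix (Fin k) (Fin k) ℝ} (hX : X.PosDef) {z : Fin k → ℝ} (hz : z ≠ 0) :
    0 < z ⬝ᵥ X.mulVec z := by simpa using hX.dotProduct_mulVec_pos hz

private lemma congrQ (Y : Matrix (Fin k) (Fin l) ℝ) (x : Fin k → ℝ) (z : Fin l → ℝ) :
    x ⬝ᵥ Y.mulVec z = (Yᵀ.mulVec x) ⬝ᵥ z := by
  rw [dotProduct_mulVec, mulVec_transpose]

private lemma symQ {X : Matrix (Fin k) (Fin k) ℝ} (hX : X.IsHermitian)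
    (x y : Fin k → ℝ) : x ⬝ᵥ X.mulVec y = y ⬝ᵥ X.mulVec x := by
  have hXt : Xᵀ = X := by
    have := hX.eq
    rwa [conjTranspose_eq_transpose_of_trivial] at this
  rw [congrQ, hXt, dotProduct_comm]

/-- Cauchy–Schwarz for a positive semidefinite bilinear form. -/
private lemma csQ {X : Matrix (Fin k) (Fin k) ℝ} (hX : X.PosSemidef) (x y : Fin k → ℝ) :
    (x ⬝ᵥ X.mulVec y) ^ 2 ≤ (x ⬝ᵥ X.mulVec x) * (y ⬝ᵥ X.mulVec y) := by
  have hsym := symQ hX.1 y x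
  have h : ∀ t : ℝ, 0 ≤ (y ⬝ᵥ X.mulVec y) * (t * t) +
      (-2 * (x ⬝ᵥ X.mulVec y)) * t + (x ⬝ᵥ X.mulVec x) := by
    intro t
    have h0 := qn hX (x - t • y)
    have hexp : (x - t • y) ⬝ᵥ X.mulVec (x - t • y) =
        (x ⬝ᵥ X.mulVec x) - t * (x ⬝ᵥ X.mulVec y) - t * (y ⬝ᵥ X.mulVec x) +
          (t * t) * (y ⬝ᵥ X.mulVec y) := by
      simp only [mulVec_sub, mulVec_smul, dotProduct_sub, sub_dotProduct,
        dotProduct_smul, smul_dotProduct, smul_eq_mul]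
      ring
    rw [hexp, hsym] at h0
    linarith
  have hd := discrim_le_zero h
  rw [discrim] at hd
  nlinarith [hd]

/-- Monotonicity of the inverse on quadratic forms. -/
private lemma invQ {X Y : Matrix (Fin k) (Fin k) ℝ} (hX : X.PosDef) (hY : Y.PosDef)
    (h : ∀ v, v ⬝ᵥ X.mulVec v ≤ v ⬝ᵥ Y.mulVec v) (v : Fin k → ℝ) :
    v ⬝ᵥ Y⁻¹.mulVec v ≤ v ⬝ᵥ X⁻¹.mulVec v := by
  have hYu : Y.mulVec (Y⁻¹.mulVec v) = v := by
    rw [mulVec_mulVec, Y.mul_nonsing_inv (isUnit_iff_ne_zero.mpr hY.det_pos.ne'),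
      one_mulVec]
  have hXx : X.mulVec (X⁻¹.mulVec v) = v := by
    rw [mulVec_mulVec, X.mul_nonsing_inv (isUnit_iff_ne_zero.mpr hX.det_pos.ne'),
      one_mulVec]
  have hq1 : (Y⁻¹.mulVec v) ⬝ᵥ Y.mulVec (Y⁻¹.mulVec v) = v ⬝ᵥ Y⁻¹.mulVec v := by
    rw [hYu, dotProduct_comm]
  have hp1 : (X⁻¹.mulVec v) ⬝ᵥ X.mulVec (X⁻¹.mulVec v) = v ⬝ᵥ X⁻¹.mulVec v := by
    rw [hXx, dotProduct_comm]
  have hux : (Y⁻¹.mulVec v) ⬝ᵥ X.mulVec (X⁻¹.mulVec v) = v ⬝ᵥ Y⁻¹.mulVec v := by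
    rw [hXx, dotProduct_comm]
  have hcs := csQ hX.posSemidef (Y⁻¹.mulVec v) (X⁻¹.mulVec v)
  rw [hux, hp1] at hcs
  have hXu : (Y⁻¹.mulVec v) ⬝ᵥ X.mulVec (Y⁻¹.mulVec v) ≤ v ⬝ᵥ Y⁻¹.mulVec v := by
    rw [← hq1]; exact h _
  have hq0 : 0 ≤ v ⬝ᵥ Y⁻¹.mulVec v := qn hY.posSemidef.inv v
  have hp0 : 0 ≤ v ⬝ᵥ X⁻¹.mulVec v := qn hX.posSemidef.inv v
  have hXu0 : 0 ≤ (Y⁻¹.mulVec v) ⬝ᵥ X.mulVec (Y⁻¹.mulVec v) := qn hX.posSemidef _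
  rcases hq0.lt_or_eq with h0 | h0
  · nlinarith
  · linarith

end Aux

/-- Upper spectral bound for the additive auxiliary space preconditioner. -/
theorem stmt_8 {n m : ℕ}
    (A : Matrix (Fin n) (Fin n) ℝ) (hA : A.PosDef)
    (B : Matrix (Fin m) (Fin m) ℝ) (hB : B.PosDef)
    (P : Matrix (Fin n) (Fin m) ℝ)
    (γ : ℝ) (hγ : 0 < γ)
    (hcont : ∀ w : Fin m → ℝ,
      (P.mulVec w) ⬝ᵥ A.mulVec (P.mulVec w) ≤ γ * (w ⬝ᵥ B.mulVec w))
    (M : Matrix (Fin n) (Fin n) ℝ) (hM : (M + Mᵀ - A).PosDef) :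
    ∀ v : Fin n → ℝ,
      v ⬝ᵥ ((M * (M + Mᵀ - A)⁻¹ * Mᵀ)⁻¹ + P * B⁻¹ * Pᵀ).mulVec v ≤
        (γ + 2) * (v ⬝ᵥ A⁻¹.mulVec v) := by
  set N := M + Mᵀ - A with hN
  set Mb := M * N⁻¹ * Mᵀ with hMb
  have hNunit : IsUnit N.det := isUnit_iff_ne_zero.mpr hM.det_pos.ne'
  have hNt : Nᵀ = N := by
    have := hM.isHermitian.eq
    rwa [conjTranspose_eq_transpose_of_trivial] at this
  -- key lower bound: vᵀ A v ≤ vᵀ M̄ v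
  have hAMb : ∀ v : Fin n → ℝ, v ⬝ᵥ A.mulVec v ≤ v ⬝ᵥ Mb.mulVec v := by
    intro v
    set t := Mᵀ.mulVec v with ht
    set u := N⁻¹.mulVec t with hu
    have hNu : N.mulVec u = t := by
      rw [hu, mulVec_mulVec, N.mul_nonsing_inv hNunit, one_mulVec]
    have hMbv : v ⬝ᵥ Mb.mulVec v = t ⬝ᵥ u := by
      rw [hMb, ← mulVec_mulVec, ← mulVec_mulVec, congrQ, ← ht, ← hu]
    have hMMt : v ⬝ᵥ M.mulVec v = v ⬝ᵥ t := by
      rw [ht, congrQ M v v]; exact dotProduct_comm _ _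
    have hNv : v ⬝ᵥ N.mulVec v = 2 * (v ⬝ᵥ t) - v ⬝ᵥ A.mulVec v := by
      rw [hN, sub_mulVec, add_mulVec, dotProduct_sub, dotProduct_add, ← ht, hMMt]
      ring
    have hvNu : v ⬝ᵥ N.mulVec u = v ⬝ᵥ t := by rw [hNu]
    have huNv : u ⬝ᵥ N.mulVec v = v ⬝ᵥ t := by
      rw [symQ hM.isHermitian, hvNu]
    have hexp : (u - v) ⬝ᵥ N.mulVec (u - v) =
        t ⬝ᵥ u - v ⬝ᵥ A.mulVec v := by
      rw [mulVec_sub, dotProduct_sub, sub_dotProduct, sub_dotProduct,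
        hvNu, huNv, hNv, hNu, dotProduct_comm u t]
      ring
    have h0 := qn hM.posSemidef (u - v)
    rw [hexp] at h0
    rw [hMbv]
    linarith
  -- M̄ is positive definite
  have hMbPD : Mb.PosDef := by
    refine Matrix.PosDef.of_dotProduct_mulVec_pos ?_ ?_
    · show Mbᴴ = Mb
      rw [conjTranspose_eq_transpose_of_trivial, hMb, transpose_mul, transpose_mul,
        transpose_transpose, transpose_nonsing_inv, hNt, Matrix.mul_assoc]
    · intro x hx
      have h1 := qp hA hx
      have h2 := hAMb x
      simpa using lt_of_lt_of_le h1 h2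
  intro v
  rw [add_mulVec, dotProduct_add]
  set p := v ⬝ᵥ A⁻¹.mulVec v with hp
  have hp0 : 0 ≤ p := qn hA.posSemidef.inv v
  -- first part: vᵀ M̄⁻¹ v ≤ p
  have h1 : v ⬝ᵥ Mb⁻¹.mulVec v ≤ p := invQ hA hMbPD hAMb v
  -- second part: vᵀ P B⁻¹ Pᵀ v ≤ γ p
  have h2 : v ⬝ᵥ (P * B⁻¹ * Pᵀ).mulVec v ≤ γ * p := by
    set r := Pᵀ.mulVec v with hr
    set w := B⁻¹.mulVec r with hw
    have hBw : B.mulVec w = r := by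
      rw [hw, mulVec_mulVec, B.mul_nonsing_inv (isUnit_iff_ne_zero.mpr hB.det_pos.ne'),
        one_mulVec]
    set s := v ⬝ᵥ (P * B⁻¹ * Pᵀ).mulVec v with hs
    have hsrw : s = r ⬝ᵥ w := by
      rw [hs, ← mulVec_mulVec, ← mulVec_mulVec, congrQ, ← hr, ← hw]
    have hsB : w ⬝ᵥ B.mulVec w = s := by rw [hBw, dotProduct_comm, hsrw]
    have hs0 : 0 ≤ s := by rw [hsrw, hw]; exact qn hB.posSemidef.inv r
    rcases hs0.lt_or_eq with hspos | hs0'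
    · -- Cauchy–Schwarz in the A-inner product
      set x := A⁻¹.mulVec v with hx
      have hAx : A.mulVec x = v := by
        rw [hx, mulVec_mulVec, A.mul_nonsing_inv (isUnit_iff_ne_zero.mpr hA.det_pos.ne'),
          one_mulVec]
      set y := P.mulVec w with hy
      have hxAy : x ⬝ᵥ A.mulVec y = s := by
        rw [symQ hA.isHermitian, hAx, hy, dotProduct_comm, congrQ, ← hr, hsrw]
      have hxAx : x ⬝ᵥ A.mulVec x = p := by
        rw [hAx, dotProduct_comm, hp, hx]
      have hyAy : y ⬝ᵥ A.mulVec y ≤ γ * s := by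
        rw [hy, ← hsB]; exact hcont w
      have hcs := csQ hA.posSemidef x y
      rw [hxAy, hxAx] at hcs
      have hyAy0 : 0 ≤ y ⬝ᵥ A.mulVec y := qn hA.posSemidef y
      nlinarith
    · rw [← hs0']; positivity
  linarith
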